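/- The functionals Δ₁ and δ₁ are unchanged by modifying finitely many terms: if sequences x and y (both tending to 0) differ in only finitely many entries, then limsup_n n·x*_n = limsup_n n·y*_n and liminf_n n·x*_n = liminf_n n·y*_n. -/

import Mathlib

open Set Filter Topology ENNReal

private lemma count_aux {x y : ℕ → ℝ} (hdiff : {n : ℕ | x n ≠ y n}.Finite) (ε : ℝ) :
    {n : ℕ | ε < |x n|}.encard ≤ {n : ℕ | ε < |y n|}.encard + hdiff.toFinset.card := by
  have hsub : {n : ℕ | ε < |x n|} ⊆ {n : ℕ | ε < |y n|} ∪ {n : ℕ | x n ≠ y n} := by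
    intro n hn
    by_cases h : x n = y n
    · left; simpa [← h] using hn
    · right; exact h
  calc {n : ℕ | ε < |x n|}.encard
      ≤ ({n : ℕ | ε < |y n|} ∪ {n : ℕ | x n ≠ y n}).encard := Set.encard_mono hsub
    _ ≤ {n : ℕ | ε < |y n|}.encard + {n : ℕ | x n ≠ y n}.encard := Set.encard_union_le _ _
    _ = {n : ℕ | ε < |y n|}.encard + hdiff.toFinset.card := by
        rw [hdiff.encard_eq_coe_toFinset_card]

private lemma shift_aux {a b : ℕ → ℝ} (k : ℕ) (ha_mono : Antitone a)
    (hb_nonneg : ∀ n, 0 ≤ b n) (hb_mono : Antitone b)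
    (hcount : ∀ ε : ℝ, 0 < ε → {n : ℕ | ε < a n}.encard ≤ {n : ℕ | ε < b n}.encard + k) :
    ∀ n, a (n + k) ≤ b n := by
  intro n
  by_contra h
  push_neg at h
  set ε := (b n + a (n + k)) / 2 with hε
  have hε1 : b n < ε := by rw [hε]; linarith
  have hε2 : ε < a (n + k) := by rw [hε]; linarith
  have hεpos : 0 < ε := lt_of_le_of_lt (hb_nonneg n) hε1
  have h1 : Set.Iic (n + k) ⊆ {m : ℕ | ε < a m} := fun m hm =>
    lt_of_lt_of_le hε2 (ha_mono hm)
  have h2 : {m : ℕ | ε < b m} ⊆ Set.Iio n := by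
    intro m hm
    by_contra hmn
    simp only [Set.mem_Iio, not_lt] at hmn
    exact absurd hm (not_lt.2 (le_of_lt (lt_of_le_of_lt (hb_mono hmn) hε1)))
  have e1 : ((n + k + 1 : ℕ) : ℕ∞) ≤ {m : ℕ | ε < a m}.encard := by
    have : (Set.Iic (n + k) : Set ℕ).encard = ((n + k + 1 : ℕ) : ℕ∞) := by
      rw [← Finset.coe_Iic, Set.encard_coe_eq_coe_finsetCard, Nat.card_Iic]
    rw [← this]
    exact Set.encard_mono h1
  have e2 : {m : ℕ | ε < b m}.encard ≤ ((n : ℕ) : ℕ∞) := by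
    have : (Set.Iio n : Set ℕ).encard = ((n : ℕ) : ℕ∞) := by
      rw [← Finset.coe_Iio, Set.encard_coe_eq_coe_finsetCard, Nat.card_Iio]
    rw [← this]
    exact Set.encard_mono h2
  have := le_trans e1 (le_trans (hcount ε hεpos) (add_le_add_left e2 (k : ℕ∞)))
  rw [show ((n : ℕ∞)) + (k : ℕ∞) = ((n + k : ℕ) : ℕ∞) by push_cast; ring] at this
  exact absurd (Nat.cast_le.mp this) (by omega)

private lemma tendsto_aux {x a : ℕ → ℝ} (hx : Tendsto x atTop (nhds (0 : ℝ)))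
    (ha_nonneg : ∀ n, 0 ≤ a n) (ha_mono : Antitone a)
    (hrearr : ∀ ε : ℝ, 0 < ε → {n : ℕ | ε < |x n|}.encard = {n : ℕ | ε < a n}.encard) :
    Tendsto a atTop (nhds (0 : ℝ)) := by
  have key : ∀ ε : ℝ, 0 < ε → ∃ N : ℕ, ∀ n ≥ N, a n ≤ ε := by
    intro ε hε
    have hxev : ∀ᶠ n in atTop, |x n| < ε := by
      have := (hx.eventually (gt_mem_nhds hε))
      have h2 := (hx.eventually (eventually_abs_sub_lt 0 hε))
      filter_upwards [h2] with n hn using by simpa using hn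
    obtain ⟨N, hN⟩ := eventually_atTop.mp hxev
    have hfin : {n : ℕ | ε < |x n|}.Finite := by
      apply Set.Finite.subset (Set.finite_Iio N)
      intro n hn
      by_contra hn'
      simp only [Set.mem_Iio, not_lt] at hn'
      exact absurd (hN n hn') (not_lt.2 (le_of_lt hn))
    have hfa : {n : ℕ | ε < a n}.Finite := by
      rw [← Set.encard_lt_top_iff, ← hrearr ε hε, Set.encard_lt_top_iff]
      exact hfin
    obtain ⟨M, hM⟩ := hfa.bddAbove
    refine ⟨M + 1, fun n hn => ?_⟩
    by_contra hcon
    push_neg at hcon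
    exact absurd (hM (Set.mem_setOf.2 hcon)) (by omega)
  rw [Metric.tendsto_atTop]
  intro ε hε
  obtain ⟨N, hN⟩ := key (ε / 2) (by linarith)
  refine ⟨N, fun n hn => ?_⟩
  rw [Real.dist_eq, sub_zero, abs_of_nonneg (ha_nonneg n)]
  exact lt_of_le_of_lt (hN n hn) (by linarith)

private lemma half_aux {a b : ℕ → ℝ} (k : ℕ)
    (hb0 : Tendsto b atTop (nhds (0 : ℝ)))
    (hshift : ∀ n, a (n + k) ≤ b n) :
    limsup (fun n : ℕ => ((n : ℝ≥0∞) + 1) * ENNReal.ofReal (a n)) atTop ≤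
        limsup (fun n : ℕ => ((n : ℝ≥0∞) + 1) * ENNReal.ofReal (b n)) atTop ∧
      liminf (fun n : ℕ => ((n : ℝ≥0∞) + 1) * ENNReal.ofReal (a n)) atTop ≤
        liminf (fun n : ℕ => ((n : ℝ≥0∞) + 1) * ENNReal.ofReal (b n)) atTop := by
  set A : ℕ → ℝ≥0∞ := fun n => ((n : ℝ≥0∞) + 1) * ENNReal.ofReal (a n) with hA
  set B : ℕ → ℝ≥0∞ := fun n => ((n : ℝ≥0∞) + 1) * ENNReal.ofReal (b n) with hB
  have hv : Tendsto (fun n : ℕ => (k : ℝ≥0∞) * ENNReal.ofReal (b n)) atTop (nhds 0) := by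
    have h1 : Tendsto (fun n : ℕ => ENNReal.ofReal (b n)) atTop (nhds 0) := by
      have := (ENNReal.continuous_ofReal.tendsto 0).comp hb0
      simpa [Function.comp_def] using this
    have := ENNReal.Tendsto.const_mul h1 (Or.inr (ENNReal.natCast_ne_top k))
    simpa using this
  have hpt : ∀ (ε : ℝ≥0∞), 0 < ε → ∀ᶠ n in atTop, A (n + k) ≤ B n + ε := by
    intro ε hε
    filter_upwards [hv.eventually (gt_mem_nhds hε)] with n hn
    have h1 : A (n + k) ≤ ((n : ℝ≥0∞) + 1) * ENNReal.ofReal (b n)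
        + (k : ℝ≥0∞) * ENNReal.ofReal (b n) := by
      have : A (n + k) ≤ (((n + k : ℕ) : ℝ≥0∞) + 1) * ENNReal.ofReal (b n) :=
        mul_le_mul_right (ENNReal.ofReal_le_ofReal (hshift n)) _
      refine this.trans (le_of_eq ?_)
      push_cast
      ring
    exact h1.trans (add_le_add_right (le_of_lt hn) _)
  have hls : ∀ (ε : ℝ≥0∞), 0 < ε → limsup A atTop ≤ limsup B atTop + ε := by
    intro ε hε
    calc limsup A atTop = limsup (fun n => A (n + k)) atTop := (limsup_nat_add A k).symm
      _ ≤ limsup (fun n => B n + ε) atTop := limsup_le_limsup (hpt ε hε)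
      _ = limsup B atTop + ε :=
          limsup_add_const atTop B ε isBounded_le_of_top isCobounded_le_of_bot
  have hli : ∀ (ε : ℝ≥0∞), 0 < ε → liminf A atTop ≤ liminf B atTop + ε := by
    intro ε hε
    calc liminf A atTop = liminf (fun n => A (n + k)) atTop := (liminf_nat_add A k).symm
      _ ≤ liminf (fun n => B n + ε) atTop := liminf_le_liminf (hpt ε hε)
      _ = liminf B atTop + ε :=
          liminf_add_const atTop B ε isCobounded_ge_of_top isBounded_ge_of_bot
  constructor
  · refine ENNReal.le_of_forall_pos_le_add fun ε hε _ => hls ε ?_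
    exact_mod_cast hε
  · refine ENNReal.le_of_forall_pos_le_add fun ε hε _ => hli ε ?_
    exact_mod_cast hε

theorem Delta_delta_finite_perturbation (x y a b : ℕ → ℝ)
    (hx : Tendsto x atTop (nhds (0 : ℝ))) (hy : Tendsto y atTop (nhds (0 : ℝ)))
    (hdiff : {n : ℕ | x n ≠ y n}.Finite)
    (ha_nonneg : ∀ n, 0 ≤ a n) (ha_mono : Antitone a)
    (hrearr_a : ∀ ε : ℝ, 0 < ε →
      {n : ℕ | ε < |x n|}.encard = {n : ℕ | ε < a n}.encard)
    (hb_nonneg : ∀ n, 0 ≤ b n) (hb_mono : Antitone b)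
    (hrearr_b : ∀ ε : ℝ, 0 < ε →
      {n : ℕ | ε < |y n|}.encard = {n : ℕ | ε < b n}.encard) :
    limsup (fun n : ℕ => ((n : ℝ≥0∞) + 1) * ENNReal.ofReal (a n)) atTop =
        limsup (fun n : ℕ => ((n : ℝ≥0∞) + 1) * ENNReal.ofReal (b n)) atTop ∧
      liminf (fun n : ℕ => ((n : ℝ≥0∞) + 1) * ENNReal.ofReal (a n)) atTop =
        liminf (fun n : ℕ => ((n : ℝ≥0∞) + 1) * ENNReal.ofReal (b n)) atTop := by
  have hdiff' : {n : ℕ | y n ≠ x n}.Finite := by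
    convert hdiff using 2
    ext n
    exact ne_comm
  set k : ℕ := max hdiff.toFinset.card hdiff'.toFinset.card with hk
  have hab : ∀ n, a (n + k) ≤ b n := by
    apply shift_aux k ha_mono hb_nonneg hb_mono
    intro ε hε
    rw [← hrearr_a ε hε, ← hrearr_b ε hε]
    refine (count_aux hdiff ε).trans (add_le_add_right ?_ _)
    exact_mod_cast le_max_left _ _
  have hba : ∀ n, b (n + k) ≤ a n := by
    apply shift_aux k hb_mono ha_nonneg ha_mono
    intro ε hε
    rw [← hrearr_a ε hε, ← hrearr_b ε hε]
    refine (count_aux hdiff' ε).trans (add_le_add_right ?_ _)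
    exact_mod_cast le_max_right _ _
  have ha0 : Tendsto a atTop (nhds (0 : ℝ)) := tendsto_aux hx ha_nonneg ha_mono hrearr_a
  have hb0 : Tendsto b atTop (nhds (0 : ℝ)) := tendsto_aux hy hb_nonneg hb_mono hrearr_b
  obtain ⟨h1, h2⟩ := half_aux k hb0 hab
  obtain ⟨h3, h4⟩ := half_aux k ha0 hba
  exact ⟨le_antisymm h1 h3, le_antisymm h2 h4⟩
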